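/- arXiv:2207.06136 — 2 statements merged into one kernel-verified Lean document; each statement's English description precedes it below -/
import Mathlib

section
/- Boldface Σ¹₁-boundedness (the boldface form of the paper's Theorem 2.6): Let X be the Polish space of all functions ℕ × ℕ → Bool (with the product topology, each factor discrete), and for x ∈ X let R_x be the binary relation on ℕ defined by m R_x n iff x (m, n) = true. Let WO ⊆ X be the set of all x such that R_x is a strict well-order of all of ℕ. If A ⊆ X is an analytic set with A ⊆ WO, then the order types of the relations R_x for x ∈ A are bounded strictly below ω₁; that is, there exists an ordinal β < ω₁ such that Ordinal.type R_x < β for every x ∈ A. -/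
open MeasureTheory

/-- The set `WO` of all `x : (ℕ × ℕ) → Bool` such that the relation
`R_x := fun m n => x (m, n) = true` is a strict well-order of all of `ℕ`. -/
def WOSet : Set ((ℕ × ℕ) → Bool) :=
  {x | IsWellOrder ℕ (fun m n => x (m, n) = true)}

namespace Sigma11BoundAux

/-- `c` is a (finite) descending chain with respect to the order coded by `x`. -/
def Desc (x : (ℕ × ℕ) → Bool) (c : List ℕ) : Prop :=
  ∀ i, i + 1 < c.length → x (c.getD (i + 1) 0, c.getD i 0) = true

/-- The "child" relation on nodes of the unraveling tree: a node records a finite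
initial segment of an element of Baire space and a finite descending-chain attempt,
together with the requirement that some point of Baire space extending the first
component makes the chain genuinely descending. -/
def Sub (f : (ℕ → ℕ) → ((ℕ × ℕ) → Bool)) (q p : List ℕ × List ℕ) : Prop :=
  (∃ a, q.1 = p.1 ++ [a]) ∧ (∃ m, q.2 = p.2 ++ [m]) ∧
    ∃ w : ℕ → ℕ, (∀ i < q.1.length, w i = q.1.getD i 0) ∧ Desc (f w) q.2

theorem sub_wf (f : (ℕ → ℕ) → ((ℕ × ℕ) → Bool)) (hf : Continuous f)
    (hwo : ∀ w, IsWellOrder ℕ (fun m n => f w (m, n) = true)) :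
    WellFounded (Sub f) := by
  by_contra hwf
  have hex : ∃ p, ¬ Acc (Sub f) p := by
    by_contra h
    push_neg at h
    exact hwf ⟨h⟩
  obtain ⟨p₀, hp₀⟩ := hex
  have hstep' : ∀ p : {p // ¬ Acc (Sub f) p}, ∃ q : {p // ¬ Acc (Sub f) p}, Sub f q.1 p.1 := by
    rintro ⟨p, hp⟩
    by_contra h
    push_neg at h
    exact hp (Acc.intro p fun y hy => by_contra fun hy2 => h ⟨y, hy2⟩ hy)
  choose F hF using hstep'
  set g : ℕ → List ℕ × List ℕ := fun n => (F^[n] ⟨p₀, hp₀⟩).1 with hgdef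
  have hstep : ∀ i : ℕ, Sub f (g (i + 1)) (g i) := by
    intro i
    have : F^[i + 1] ⟨p₀, hp₀⟩ = F (F^[i] ⟨p₀, hp₀⟩) := Function.iterate_succ_apply' F i _
    simp only [hgdef, this]
    exact hF _
  -- initial segments are nested
  have pre1 : ∀ i j, i ≤ j → (g i).1 <+: (g j).1 := by
    intro i j hij
    induction j, hij using Nat.le_induction with
    | base => exact List.prefix_rfl
    | succ j hij IH =>
      obtain ⟨⟨a, ha⟩, -, -⟩ := hstep j
      refine IH.trans ?_
      rw [ha]; exact List.prefix_append _ _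
  have pre2 : ∀ i j, i ≤ j → (g i).2 <+: (g j).2 := by
    intro i j hij
    induction j, hij using Nat.le_induction with
    | base => exact List.prefix_rfl
    | succ j hij IH =>
      obtain ⟨-, ⟨m, hm⟩, -⟩ := hstep j
      refine IH.trans ?_
      rw [hm]; exact List.prefix_append _ _
  have len1 : ∀ i, i ≤ (g i).1.length := by
    intro i
    induction i with
    | zero => exact Nat.zero_le _
    | succ i IH =>
      obtain ⟨⟨a, ha⟩, -, -⟩ := hstep i
      rw [ha, List.length_append]
      simpa using IH
  have len2 : ∀ i, i ≤ (g i).2.length := by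
    intro i
    induction i with
    | zero => exact Nat.zero_le _
    | succ i IH =>
      obtain ⟨-, ⟨m, hm⟩, -⟩ := hstep i
      rw [hm, List.length_append]
      simpa using IH
  -- the limit point `z` and the putative infinite descending chain `N`
  set z : ℕ → ℕ := fun k => (g (k + 1)).1.getD k 0 with hzdef
  set N : ℕ → ℕ := fun k => (g (k + 1)).2.getD k 0 with hNdef
  have hz : ∀ k i, k < i → (g i).1.getD k 0 = z k := by
    intro k i hki
    obtain ⟨t, ht⟩ := pre1 (k + 1) i hki
    rw [← ht, List.getD_append _ _ _ _ (lt_of_lt_of_le (Nat.lt_succ_self k) (len1 (k + 1)))]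
  have hN : ∀ k i, k < i → (g i).2.getD k 0 = N k := by
    intro k i hki
    obtain ⟨t, ht⟩ := pre2 (k + 1) i hki
    rw [← ht, List.getD_append _ _ _ _ (lt_of_lt_of_le (Nat.lt_succ_self k) (len2 (k + 1)))]
  -- the witnesses from each step
  have hwit := fun i => (hstep i).2.2
  choose w hw1 hw2 using hwit
  have hwz : ∀ k i, k < i → w i k = z k := by
    intro k i hki
    rw [hw1 i k (lt_of_lt_of_le (hki.trans (Nat.lt_succ_self i)) (len1 (i + 1)))]
    exact hz k (i + 1) (hki.trans (Nat.lt_succ_self i))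
  have hwt : Filter.Tendsto w Filter.atTop (nhds z) := by
    rw [tendsto_pi_nhds]
    intro k
    refine Filter.Tendsto.congr' ?_ tendsto_const_nhds
    filter_upwards [Filter.eventually_gt_atTop k] with i hik
    exact (hwz k i hik).symm
  have hft : Filter.Tendsto (fun i => f (w i)) Filter.atTop (nhds (f z)) :=
    (hf.tendsto z).comp hwt
  have hdesc : ∀ j, f z (N (j + 1), N j) = true := by
    intro j
    have hpt : Filter.Tendsto (fun i => f (w i) (N (j + 1), N j)) Filter.atTop
        (nhds (f z (N (j + 1), N j))) := tendsto_pi_nhds.1 hft _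
    have hmem : ({f z (N (j + 1), N j)} : Set Bool) ∈ nhds (f z (N (j + 1), N j)) :=
      (isOpen_discrete _).mem_nhds rfl
    have hev : ∀ᶠ i in Filter.atTop,
        f (w i) (N (j + 1), N j) ∈ ({f z (N (j + 1), N j)} : Set Bool) :=
      hpt.eventually_mem hmem
    obtain ⟨i, hi1, hi2⟩ := (hev.and (Filter.eventually_ge_atTop (j + 2))).exists
    have hlen : j + 1 < (g (i + 1)).2.length :=
      lt_of_lt_of_le (by omega) (len2 (i + 1))
    have := hw2 i j hlen
    rw [hN (j + 1) (i + 1) (by omega), hN j (i + 1) (by omega)] at this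
    rw [Set.mem_singleton_iff] at hi1
    rw [← hi1]
    exact this
  haveI := hwo z
  exact (RelEmbedding.natGT N hdesc).not_wellFounded (hwo z).toIsWellFounded.wf

theorem rank_lt_omega1 {α : Type} [Countable α] (r : α → α → Prop) [IsWellFounded α r] (a : α) :
    IsWellFounded.rank r a < (Cardinal.aleph 1).ord := by
  induction a using IsWellFounded.induction r with
  | ind a IH =>
    rw [IsWellFounded.rank_eq]
    refine Cardinal.iSup_lt_ord_lift_of_isRegular Cardinal.isRegular_aleph_one ?_ ?_
    · rw [Cardinal.lift_id]
      exact lt_of_le_of_lt Cardinal.mk_le_aleph0 Cardinal.aleph0_lt_aleph_one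
    · rintro ⟨b, hb⟩
      exact (Cardinal.isSuccLimit_ord (Cardinal.aleph0_le_aleph 1)).succ_lt (IH b hb)

theorem type_le_of_typein_lt {α : Type} {r : α → α → Prop} [IsWellOrder α r] {o : Ordinal}
    (h : ∀ a, Ordinal.typein r a < o) : Ordinal.type r ≤ o := by
  by_contra hlt
  push_neg at hlt
  have h2 := h (Ordinal.enum r ⟨o, hlt⟩)
  rw [Ordinal.typein_enum] at h2
  exact lt_irrefl o h2

theorem rank_le_rank_sub (f : (ℕ → ℕ) → ((ℕ × ℕ) → Bool))
    [IsWellFounded (List ℕ × List ℕ) (Sub f)]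
    (z : ℕ → ℕ) [IsWellFounded ℕ (fun m n => f z (m, n) = true)] :
    ∀ n : ℕ, ∀ c : List ℕ, c ≠ [] → c.getD (c.length - 1) 0 = n → Desc (f z) c →
      IsWellFounded.rank (fun m n => f z (m, n) = true) n ≤
        IsWellFounded.rank (Sub f) ((List.range c.length).map z, c) := by
  intro n
  induction n using IsWellFounded.induction (fun m n => f z (m, n) = true) with
  | ind n IH =>
    intro c hc hlast hdesc
    rw [IsWellFounded.rank_eq]
    refine Ordinal.iSup_le ?_
    rintro ⟨m, hm⟩
    have hclen : 1 ≤ c.length := by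
      cases c with
      | nil => exact absurd rfl hc
      | cons a t => simp
    have hdesc' : Desc (f z) (c ++ [m]) := by
      intro i hi
      rcases Nat.lt_or_ge (i + 1) c.length with h | h
      · rw [List.getD_append _ _ _ _ h, List.getD_append _ _ _ _ (Nat.lt_of_succ_lt h)]
        exact hdesc i h
      · have hlen : i + 1 = c.length := by
          rw [List.length_append, List.length_singleton] at hi
          omega
        have h1 : (c ++ [m]).getD (i + 1) 0 = m := by
          rw [List.getD_append_right _ _ _ _ (le_of_eq hlen.symm), hlen, Nat.sub_self]
          rfl
        have h2 : (c ++ [m]).getD i 0 = n := by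
          rw [List.getD_append _ _ _ _ (by omega), ← hlast]
          congr 1
          omega
        rw [h1, h2]
        exact hm
    have hchild : Sub f ((List.range (c.length + 1)).map z, c ++ [m])
        ((List.range c.length).map z, c) := by
      refine ⟨⟨z c.length, ?_⟩, ⟨m, rfl⟩, z, ?_, hdesc'⟩
      · rw [List.range_succ, List.map_append]
        rfl
      · intro i hi
        rw [List.length_map, List.length_range] at hi
        rw [List.getD_eq_getElem _ _ (by simpa using hi)]
        simp
    have hIH := IH m hm (c ++ [m]) (by simp)
      (by
        rw [List.length_append, List.length_singleton, Nat.add_sub_cancel,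
          List.getD_append_right _ _ _ _ (le_refl _), Nat.sub_self]
        rfl)
      hdesc'
    rw [List.length_append, List.length_singleton] at hIH
    have hrlt : IsWellFounded.rank (Sub f) ((List.range (c.length + 1)).map z, c ++ [m]) <
        IsWellFounded.rank (Sub f) ((List.range c.length).map z, c) :=
      IsWellFounded.rank_lt_of_rel hchild
    exact Order.succ_le_of_lt (lt_of_le_of_lt hIH hrlt)

end Sigma11BoundAux

open Sigma11BoundAux in
/-- Boldface Σ¹₁-boundedness: if `A` is an analytic subset of the Polish space
`(ℕ × ℕ) → Bool` consisting only of codes of well-orders of `ℕ`, then the order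
types of the coded well-orders are bounded strictly below `ω₁`. -/
theorem boldface_sigma11_bounding
    (A : Set ((ℕ × ℕ) → Bool)) (hA : AnalyticSet A) (hAWO : A ⊆ WOSet) :
    ∃ β < (Cardinal.aleph 1).ord, ∀ x, ∀ hx : x ∈ A,
      @Ordinal.type ℕ (fun m n => x (m, n) = true) (hAWO hx) < β := by
  rw [MeasureTheory.AnalyticSet_def] at hA
  rcases hA with rfl | ⟨f, hf, hrange⟩
  · refine ⟨1, ?_, fun x hx => absurd hx (Set.notMem_empty x)⟩
    have h1 : (1 : Cardinal).ord < (Cardinal.aleph 1).ord :=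
      Cardinal.ord_lt_ord.2 (lt_of_lt_of_le Cardinal.one_lt_aleph0
        Cardinal.aleph0_lt_aleph_one.le)
    simpa using h1
  · have hwo : ∀ w, IsWellOrder ℕ (fun m n => f w (m, n) = true) := fun w =>
      hAWO (hrange ▸ Set.mem_range_self w)
    haveI : IsWellFounded (List ℕ × List ℕ) (Sub f) := ⟨sub_wf f hf hwo⟩
    set Γ := ⨆ p : List ℕ × List ℕ, IsWellFounded.rank (Sub f) p with hΓ
    have hΓlt : Γ < (Cardinal.aleph 1).ord := by
      refine Cardinal.iSup_lt_ord_lift_of_isRegular Cardinal.isRegular_aleph_one ?_ ?_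
      · rw [Cardinal.lift_id]
        exact lt_of_le_of_lt Cardinal.mk_le_aleph0 Cardinal.aleph0_lt_aleph_one
      · intro p
        exact rank_lt_omega1 _ p
    have hlim := Cardinal.isSuccLimit_ord (Cardinal.aleph0_le_aleph 1)
    refine ⟨Order.succ (Order.succ Γ), hlim.succ_lt (hlim.succ_lt hΓlt), ?_⟩
    intro x hx
    obtain ⟨z, rfl⟩ := show x ∈ Set.range f from hrange.symm ▸ hx
    haveI hIW : IsWellOrder ℕ (fun m n => f z (m, n) = true) := hwo z
    refine lt_of_le_of_lt ?_ (Order.lt_succ _)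
    refine type_le_of_typein_lt ?_
    intro n
    have hr : IsWellFounded.rank (fun m n => f z (m, n) = true) n ≤ Γ := by
      have h1 := rank_le_rank_sub f z n [n] (by simp) (by simp)
        (fun i hi => absurd hi (by simp))
      exact h1.trans (Ordinal.le_iSup _ _)
    have heq := congrFun (IsWellFounded.rank_eq_typein (fun m n => f z (m, n) = true)) n
    calc Ordinal.typein (fun m n => f z (m, n) = true) n
        = IsWellFounded.rank (fun m n => f z (m, n) = true) n := heq.symm
      _ ≤ Γ := hr
      _ < Order.succ Γ := Order.lt_succ Γ
end

section
/- Kunen–Martin theorem (the engine behind the paper's Theorem 2.6): Let R be a binary relation on Baire space ℕ → ℕ such that the set {(x, y) : R x y} is an analytic subset of the product space (ℕ → ℕ) × (ℕ → ℕ), and suppose R is well-founded. Then the ordinal rank of R is strictly less than ω₁; that is, for every x : ℕ → ℕ, the rank of x with respect to R is strictly less than (Cardinal.aleph 1).ord. -/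
open MeasureTheory

namespace KunenMartinAux

/-- Nodes of the "tree of attempts": a length `n`, approximations `u i k` of the
reals in a descending chain, and approximations `w i k` of witnesses. -/
abbrev Node : Type := ℕ × (ℕ → ℕ → ℕ) × (ℕ → ℕ → ℕ)

/-- Consistency of a node with the continuous function `f`. -/
def Cons (f : (ℕ → ℕ) → (ℕ → ℕ) × (ℕ → ℕ)) (s : Node) : Prop :=
  ∀ i, i + 1 < s.1 → ∃ ζ : ℕ → ℕ,
    (∀ k, k < s.1 → ζ k = s.2.2 (i + 1) k) ∧
    (∀ k, k < s.1 → (f ζ).1 k = s.2.1 (i + 1) k ∧ (f ζ).2 k = s.2.1 i k)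

/-- One-step extension relation on nodes. -/
def Step (f : (ℕ → ℕ) → (ℕ → ℕ) × (ℕ → ℕ)) (t s : Node) : Prop :=
  t.1 = s.1 + 1 ∧
  (∀ i k, i < s.1 → k < s.1 → t.2.1 i k = s.2.1 i k ∧ t.2.2 i k = s.2.2 i k) ∧
  (∀ i k, t.1 ≤ i ∨ t.1 ≤ k → t.2.1 i k = 0 ∧ t.2.2 i k = 0) ∧
  Cons f t

/-- The node attached to a finite chain `c 0, …, c (n-1)` with witness choice
function `zf`. -/
def phi (zf : (ℕ → ℕ) → (ℕ → ℕ) → (ℕ → ℕ)) (n : ℕ) (c : ℕ → ℕ → ℕ) : Node :=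
  ⟨n, fun i k => if i < n ∧ k < n then c i k else 0,
    fun i k => if 0 < i ∧ i < n ∧ k < n then zf (c i) (c (i - 1)) k else 0⟩

lemma no_descending {α : Type*} {r : α → α → Prop} (h : WellFounded r)
    (a : ℕ → α) (ha : ∀ n, r (a (n + 1)) (a n)) : False := by
  obtain ⟨_, ⟨n, rfl⟩, hmin⟩ := h.has_min (Set.range a) ⟨a 0, 0, rfl⟩
  exact hmin (a (n + 1)) ⟨n + 1, rfl⟩ (ha n)

/-- Each node has only countably many `Step`-predecessors. -/
lemma countable_step (f : (ℕ → ℕ) → (ℕ → ℕ) × (ℕ → ℕ)) (s : Node) :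
    Countable {t : Node // Step f t s} := by
  have hinj : Function.Injective
      (fun t : {t : Node // Step f t s} =>
        (fun p : Fin (s.1 + 1) × Fin (s.1 + 1) =>
          (t.1.2.1 p.1 p.2, t.1.2.2 p.1 p.2))) := by
    rintro ⟨⟨n, u, w⟩, hn, hagree, hz, hcons⟩ ⟨⟨n', u', w'⟩, hn', hagree', hz', hcons'⟩ h
    simp only at hn hn' hz hz' h
    subst hn hn'
    have hu : u = u' := by
      funext i k
      by_cases hik : i < s.1 + 1 ∧ k < s.1 + 1
      · exact congrArg Prod.fst (congrFun h (⟨i, hik.1⟩, ⟨k, hik.2⟩))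
      · rw [(hz i k (by omega)).1, (hz' i k (by omega)).1]
    have hw : w = w' := by
      funext i k
      by_cases hik : i < s.1 + 1 ∧ k < s.1 + 1
      · exact congrArg Prod.snd (congrFun h (⟨i, hik.1⟩, ⟨k, hik.2⟩))
      · rw [(hz i k (by omega)).2, (hz' i k (by omega)).2]
    subst hu
    subst hw
    rfl
  exact hinj.countable

/-- A well-founded relation all of whose predecessor sets are countable has
rank everywhere below `ω₁`. -/
lemma rank_lt_omega1 {α : Type} {r : α → α → Prop} (h : WellFounded r)
    (hc : ∀ a, Countable {b // r b a}) (a : α) :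
    (h.apply a).rank < (Cardinal.aleph 1).ord := by
  induction a using h.induction with
  | _ a IH =>
    rw [(h.apply a).rank_eq]
    apply Ordinal.iSup_lt_ord
    · rw [Cardinal.isRegular_aleph_one.cof_eq]
      haveI := hc a
      exact lt_of_le_of_lt Cardinal.mk_le_aleph0 Cardinal.aleph0_lt_aleph_one
    · rintro ⟨b, hb⟩
      exact (Cardinal.isSuccLimit_ord (Cardinal.aleph0_le_aleph 1)).succ_lt (IH b hb)

/-- `Step f` is well-founded when `f` maps into the graph of a well-founded
relation `R`. -/
lemma step_wf {R : (ℕ → ℕ) → (ℕ → ℕ) → Prop}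
    (f : (ℕ → ℕ) → (ℕ → ℕ) × (ℕ → ℕ)) (hfc : Continuous f)
    (hgraph : ∀ ζ, R (f ζ).1 (f ζ).2) (hwf : WellFounded R) :
    WellFounded (Step f) := by
  constructor
  intro a
  by_contra ha
  -- build a descending sequence by dependent choice
  have hch : ∀ p : {b : Node // ¬Acc (Step f) b},
      ∃ q : {b : Node // ¬Acc (Step f) b}, Step f q.1 p.1 := by
    rintro ⟨b, hb⟩
    obtain ⟨c, hc1, hc2⟩ := exists_not_acc_lt_of_not_acc hb
    exact ⟨⟨c, hc1⟩, hc2⟩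
  choose next hnext using hch
  set g : ℕ → Node := fun n => (next^[n] ⟨a, ha⟩).1 with hgdef
  have hstep : ∀ n, Step f (g (n + 1)) (g n) := by
    intro n
    simp only [hgdef, Function.iterate_succ', Function.comp_apply]
    exact hnext _
  -- lengths grow by one
  have hN : ∀ n, (g n).1 = (g 0).1 + n := by
    intro n
    induction n with
    | zero => rfl
    | succ n ih => rw [(hstep n).1, ih]; ring
  have hNle : ∀ n, n ≤ (g n).1 := fun n => by rw [hN n]; omega
  -- coherence of values
  have coh : ∀ m n, m ≤ n → ∀ i k, i < (g m).1 → k < (g m).1 →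
      (g n).2.1 i k = (g m).2.1 i k ∧ (g n).2.2 i k = (g m).2.2 i k := by
    intro m n hmn
    induction n, hmn using Nat.le_induction with
    | base => exact fun i k _ _ => ⟨rfl, rfl⟩
    | succ n hmn ih =>
      intro i k hi hk
      have hi' : i < (g n).1 := lt_of_lt_of_le hi (by rw [hN m, hN n]; omega)
      have hk' : k < (g n).1 := lt_of_lt_of_le hk (by rw [hN m, hN n]; omega)
      have := (hstep n).2.1 i k hi' hk'
      exact ⟨this.1.trans (ih i k hi hk).1, this.2.trans (ih i k hi hk).2⟩
  -- the limit reals and witnesses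
  set x : ℕ → ℕ → ℕ := fun i k => (g (i + k + 1)).2.1 i k with hx
  set z : ℕ → ℕ → ℕ := fun i k => (g (i + k + 1)).2.2 i k with hz
  have hval : ∀ m i k, i < (g m).1 → k < (g m).1 →
      (g m).2.1 i k = x i k ∧ (g m).2.2 i k = z i k := by
    intro m i k hi hk
    have h1 : i < (g (i + k + 1)).1 := lt_of_lt_of_le (by omega) (hNle _)
    have h2 : k < (g (i + k + 1)).1 := lt_of_lt_of_le (by omega) (hNle _)
    rcases le_total m (i + k + 1) with hle | hle
    · have := coh m (i + k + 1) hle i k hi hk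
      exact ⟨this.1.symm, this.2.symm⟩
    · have := coh (i + k + 1) m hle i k h1 h2
      exact ⟨this.1, this.2⟩
  -- each consecutive pair is R-related
  have hR : ∀ i, R (x (i + 1)) (x i) := by
    intro i
    -- approximate witnesses
    have happ : ∀ n : ℕ, ∃ ζ : ℕ → ℕ,
        (∀ k, k < n → ζ k = z (i + 1) k) ∧
        (∀ k, k < n → (f ζ).1 k = x (i + 1) k ∧ (f ζ).2 k = x i k) := by
      intro n
      set m : ℕ := i + n + 2 with hm
      have hmpos : m = (m - 1) + 1 := by omega
      have hcons : Cons f (g m) := by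
        have := (hstep (m - 1)).2.2.2
        rwa [← hmpos] at this
      have hi1 : i + 1 < (g m).1 := lt_of_lt_of_le (by omega) (hNle m)
      obtain ⟨ζ, hζ1, hζ2⟩ := hcons i hi1
      have hnm : n ≤ (g m).1 := le_trans (by omega) (hNle m)
      refine ⟨ζ, fun k hk => ?_, fun k hk => ?_⟩
      · rw [hζ1 k (lt_of_lt_of_le hk hnm),
          (hval m (i + 1) k hi1 (lt_of_lt_of_le hk hnm)).2]
      · have hk' : k < (g m).1 := lt_of_lt_of_le hk hnm
        have hi0 : i < (g m).1 := by omega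
        obtain ⟨h1, h2⟩ := hζ2 k hk'
        exact ⟨h1.trans (hval m (i + 1) k hi1 hk').1,
          h2.trans (hval m i k hi0 hk').1⟩
    choose ζ hζ1 hζ2 using happ
    -- convergence
    have htendζ : Filter.Tendsto ζ Filter.atTop (nhds (z (i + 1))) := by
      rw [tendsto_pi_nhds]
      intro k
      refine Filter.Tendsto.congr' ?_ tendsto_const_nhds
      filter_upwards [Filter.eventually_ge_atTop (k + 1)] with n hn
      exact (hζ1 n k (by omega)).symm
    have htendf : Filter.Tendsto (fun n => f (ζ n)) Filter.atTop
        (nhds (f (z (i + 1)))) := (hfc.tendsto _).comp htendζ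
    have htendf' : Filter.Tendsto (fun n => f (ζ n)) Filter.atTop
        (nhds (x (i + 1), x i)) := by
      rw [nhds_prod_eq]
      refine Filter.Tendsto.prodMk ?_ ?_ <;> rw [tendsto_pi_nhds] <;> intro k <;>
        refine Filter.Tendsto.congr' ?_ tendsto_const_nhds <;>
        filter_upwards [Filter.eventually_ge_atTop (k + 1)] with n hn
      · exact ((hζ2 n k (by omega)).1).symm
      · exact ((hζ2 n k (by omega)).2).symm
    have heq : f (z (i + 1)) = (x (i + 1), x i) :=
      tendsto_nhds_unique htendf htendf'
    have := hgraph (z (i + 1))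
    rwa [heq] at this
  exact no_descending hwf x hR

/-- Extending a chain by one element yields a `Step`. -/
lemma phi_step {R : (ℕ → ℕ) → (ℕ → ℕ) → Prop}
    (f : (ℕ → ℕ) → (ℕ → ℕ) × (ℕ → ℕ)) (zf : (ℕ → ℕ) → (ℕ → ℕ) → (ℕ → ℕ))
    (hzf : ∀ a b, R a b → f (zf a b) = (a, b))
    (n : ℕ) (c : ℕ → ℕ → ℕ) (hchain : ∀ i, i + 1 < n + 1 → R (c (i + 1)) (c i)) :
    Step f (phi zf (n + 1) c) (phi zf n c) := by
  refine ⟨rfl, ?_, ?_, ?_⟩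
  · intro i k hi hk
    replace hi : i < n := hi
    replace hk : k < n := hk
    constructor
    · show (if i < n + 1 ∧ k < n + 1 then c i k else 0) =
        (if i < n ∧ k < n then c i k else 0)
      rw [if_pos ⟨by omega, by omega⟩, if_pos ⟨hi, hk⟩]
    · show (if 0 < i ∧ i < n + 1 ∧ k < n + 1 then zf (c i) (c (i - 1)) k else 0) =
        (if 0 < i ∧ i < n ∧ k < n then zf (c i) (c (i - 1)) k else 0)
      by_cases h0 : 0 < i
      · rw [if_pos ⟨h0, by omega, by omega⟩, if_pos ⟨h0, hi, hk⟩]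
      · rw [if_neg (by omega), if_neg (by omega)]
  · intro i k hik
    replace hik : n + 1 ≤ i ∨ n + 1 ≤ k := hik
    constructor
    · show (if i < n + 1 ∧ k < n + 1 then c i k else 0) = 0
      rw [if_neg (by omega)]
    · show (if 0 < i ∧ i < n + 1 ∧ k < n + 1 then zf (c i) (c (i - 1)) k else 0) = 0
      rw [if_neg (by omega)]
  · intro i hi
    replace hi : i + 1 < n + 1 := hi
    refine ⟨zf (c (i + 1)) (c i), fun k hk => ?_, fun k hk => ?_⟩
    · replace hk : k < n + 1 := hk
      show zf (c (i + 1)) (c i) k =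
        (if 0 < i + 1 ∧ i + 1 < n + 1 ∧ k < n + 1 then
          zf (c (i + 1)) (c (i + 1 - 1)) k else 0)
      rw [if_pos ⟨by omega, hi, hk⟩]
      norm_num
    · replace hk : k < n + 1 := hk
      have hfz : f (zf (c (i + 1)) (c i)) = (c (i + 1), c i) :=
        hzf _ _ (hchain i hi)
      rw [hfz]
      constructor
      · show c (i + 1) k = (if i + 1 < n + 1 ∧ k < n + 1 then c (i + 1) k else 0)
        rw [if_pos ⟨hi, hk⟩]
      · show c i k = (if i < n + 1 ∧ k < n + 1 then c i k else 0)
        rw [if_pos ⟨by omega, hk⟩]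

end KunenMartinAux

/-- Kunen–Martin theorem: a well-founded relation `R` on Baire space `ℕ → ℕ` whose
graph is an analytic subset of the product `(ℕ → ℕ) × (ℕ → ℕ)` has rank strictly
less than `ω₁`: the rank of every point is strictly less than the first
uncountable ordinal. -/
theorem kunen_martin (R : (ℕ → ℕ) → (ℕ → ℕ) → Prop)
    (hanalytic : AnalyticSet {p : (ℕ → ℕ) × (ℕ → ℕ) | R p.1 p.2})
    (hwf : WellFounded R) :
    ∀ x : ℕ → ℕ, (hwf.apply x).rank < (Cardinal.aleph 1).ord := by
  open KunenMartinAux in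
  rw [AnalyticSet] at hanalytic
  rcases hanalytic with hempty | ⟨f, hfc, hfrange⟩
  · -- empty graph: every predecessor set is empty
    intro x
    refine rank_lt_omega1 hwf (fun a => ?_) x
    have : IsEmpty {b // R b a} := ⟨fun ⟨b, hb⟩ => by
      have : (b, a) ∈ ({p : (ℕ → ℕ) × (ℕ → ℕ) | R p.1 p.2}) := hb
      rw [hempty] at this
      exact this⟩
    infer_instance
  · intro x
    have hgraph : ∀ ζ, R (f ζ).1 (f ζ).2 := by
      intro ζ
      have : f ζ ∈ Set.range f := ⟨ζ, rfl⟩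
      rw [hfrange] at this
      exact this
    have hwfS : WellFounded (Step f) := step_wf f hfc hgraph hwf
    -- choose witnesses
    have hex : ∀ a b : ℕ → ℕ, ∃ ζ : ℕ → ℕ, R a b → f ζ = (a, b) := by
      intro a b
      by_cases h : R a b
      · have : (a, b) ∈ Set.range f := by rw [hfrange]; exact h
        obtain ⟨ζ, hζ⟩ := this
        exact ⟨ζ, fun _ => hζ⟩
      · exact ⟨fun _ => 0, fun h' => absurd h' h⟩
    choose zf hzf using hex
    have main : ∀ y : ℕ → ℕ, ∀ (n : ℕ) (c : ℕ → ℕ → ℕ), 0 < n →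
        (∀ i, i + 1 < n → R (c (i + 1)) (c i)) → c (n - 1) = y →
        (hwf.apply y).rank ≤ (hwfS.apply (phi zf n c)).rank := by
      intro y
      induction y using hwf.induction with
      | _ y IH =>
        intro n c hn hchain hlast
        rw [(hwf.apply y).rank_eq]
        apply Ordinal.iSup_le
        rintro ⟨y', hy'⟩
        rw [Order.succ_le_iff]
        set c' : ℕ → ℕ → ℕ := fun i => if i = n then y' else c i with hc'
        have hc'lt : ∀ i, i < n → c' i = c i := by
          intro i hi
          simp only [hc']
          rw [if_neg (by omega)]
        have hc'n : c' n = y' := by simp [hc']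
        have hchain' : ∀ i, i + 1 < n + 1 → R (c' (i + 1)) (c' i) := by
          intro i hi
          rcases Nat.lt_or_ge (i + 1) n with h | h
          · rw [hc'lt (i + 1) h, hc'lt i (by omega)]
            exact hchain i h
          · have hi1 : i + 1 = n := by omega
            have hin : i < n := by omega
            rw [hi1, hc'n, hc'lt i hin]
            have hcy : c i = y := by
              have hieq : i = n - 1 := by omega
              rw [hieq, hlast]
            rw [hcy]
            exact hy'
        have hstepn : Step f (phi zf (n + 1) c') (phi zf n c') :=
          phi_step f zf hzf n c' hchain'
        have hphieq : phi zf n c' = phi zf n c := by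
          unfold phi
          refine Prod.ext rfl (Prod.ext ?_ ?_) <;> funext i k
          · by_cases hik : i < n ∧ k < n
            · simp only [if_pos hik, hc'lt i hik.1]
            · simp only [if_neg hik]
          · by_cases hik : 0 < i ∧ i < n ∧ k < n
            · simp only [if_pos hik, hc'lt i hik.2.1, hc'lt (i - 1) (by omega)]
            · simp only [if_neg hik]
        rw [hphieq] at hstepn
        have h1 : (hwf.apply y').rank ≤ (hwfS.apply (phi zf (n + 1) c')).rank := by
          refine IH y' hy' (n + 1) c' (by omega) (fun i hi => hchain' i hi) ?_
          simpa using hc'n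
        exact lt_of_le_of_lt h1 ((hwfS.apply _).rank_lt_of_rel hstepn)
    have hx : (hwf.apply x).rank ≤ (hwfS.apply (phi zf 1 (fun _ => x))).rank :=
      main x 1 (fun _ => x) one_pos (fun i hi => by omega) rfl
    exact lt_of_le_of_lt hx (rank_lt_omega1 hwfS (countable_step f) _)
end
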